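/- Let V : ℝ → ℝ be even, non-negative, non-increasing on (0,∞), integrable with finite first moment, let a := ∫₀^∞ V, and for γ > 0 define h_γ(x) := (1/(2aγ)) ∫₀^∞ [V(y + 2γ√a − x) − V(y + x)] y dy. Then for all γ ≥ 1 and all x ∈ [√γ, 2γ√a − √γ] one has |h_γ(x)| ≤ σ(γ)/γ, where σ(γ) := (1/(2a)) ∫_{√γ}^∞ z V(z) dz, and σ(γ) → 0 as γ → ∞. -/

import Mathlib

open MeasureTheory Set Filter
open scoped ENNReal Topology

noncomputable section

/-- The auxiliary boundary function
`h_γ(x) = (1/(2aγ)) ∫₀^∞ [V(y + 2γ√a − x) − V(y + x)] y dy`. -/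
def hGam (V : ℝ → ℝ) (a γ x : ℝ) : ℝ :=
  (1 / (2 * a * γ)) *
    ∫ y in Ioi (0 : ℝ), (V (y + 2 * γ * Real.sqrt a - x) - V (y + x)) * y

/-- `σ(γ) = (1/(2a)) ∫_{√γ}^∞ z V(z) dz`. -/
def sigmaGam (V : ℝ → ℝ) (a γ : ℝ) : ℝ :=
  (1 / (2 * a)) * ∫ z in Ioi (Real.sqrt γ), z * V z

-- substitution lemma
lemma subst_integral (V : ℝ → ℝ) (c : ℝ) :
    ∫ y in Ioi (0 : ℝ), V (y + c) * y = ∫ z in Ioi c, (z - c) * V z := by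
  symm
  have hemb : MeasurableEmbedding (fun y : ℝ => y + c) :=
    (MeasurableEquiv.addRight c).measurableEmbedding
  have hmap : Measure.map (fun y : ℝ => y + c) volume = volume :=
    map_add_right_eq_self volume c
  calc ∫ z in Ioi c, (z - c) * V z
      = ∫ z in Ioi c, (z - c) * V z ∂(Measure.map (fun y : ℝ => y + c) volume) := by
        rw [hmap]
    _ = ∫ y in (fun y : ℝ => y + c) ⁻¹' Ioi c, (y + c - c) * V (y + c) :=
        hemb.setIntegral_map _ _
    _ = ∫ y in Ioi (0 : ℝ), V (y + c) * y := by
        rw [preimage_add_const_Ioi, sub_self]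
        congr 1
        ext y
        ring_nf

lemma subst_integrable (V : ℝ → ℝ) (c : ℝ)
    (h : IntegrableOn (fun z => (z - c) * V z) (Ioi c)) :
    IntegrableOn (fun y => V (y + c) * y) (Ioi (0 : ℝ)) := by
  have hemb : MeasurableEmbedding (fun y : ℝ => y + c) :=
    (MeasurableEquiv.addRight c).measurableEmbedding
  have hmap : Measure.map (fun y : ℝ => y + c) volume = volume :=
    map_add_right_eq_self volume c
  have h' : IntegrableOn (fun z => (z - c) * V z) (Ioi c)
      (Measure.map (fun y : ℝ => y + c) volume) := by rwa [hmap]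
  have := hemb.integrableOn_map_iff.mp h'
  rw [preimage_add_const_Ioi, sub_self] at this
  refine this.congr_fun (fun y _ => ?_) measurableSet_Ioi
  simp only [Function.comp]
  ring

theorem stmt4 (V : ℝ → ℝ) (hVeven : ∀ x, V (-x) = V x) (hVnonneg : ∀ x, 0 ≤ V x)
    (hVmono : AntitoneOn V (Ioi (0 : ℝ))) (hVint : Integrable V)
    (hVmom : Integrable (fun x => |x| * V x)) (a : ℝ)
    (ha : a = ∫ x in Ioi (0 : ℝ), V x) :
    (∀ γ : ℝ, 1 ≤ γ →
      ∀ x ∈ Icc (Real.sqrt γ) (2 * γ * Real.sqrt a - Real.sqrt γ),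
        |hGam V a γ x| ≤ sigmaGam V a γ / γ) ∧
    Tendsto (fun γ => sigmaGam V a γ) atTop (𝓝 0) := by
  have haNN : 0 ≤ a := ha ▸ setIntegral_nonneg measurableSet_Ioi (fun x _ => hVnonneg x)
  -- integrability of z * V z on Ioi t for t ≥ 0
  have hzV : ∀ t : ℝ, 0 ≤ t → IntegrableOn (fun z => z * V z) (Ioi t) := by
    intro t ht
    refine ((hVmom.integrableOn (s := Ioi t)).congr_fun (fun z hz => ?_) measurableSet_Ioi)
    show |z| * V z = z * V z
    rw [abs_of_pos (lt_of_le_of_lt ht hz)]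
  -- integrability of (z - c) * V z on Ioi c for c ≥ 0
  have hdiffInt : ∀ c : ℝ, 0 ≤ c → IntegrableOn (fun z => (z - c) * V z) (Ioi c) := by
    intro c hc
    refine Integrable.mono (hzV c hc) ?_ ?_
    · exact ((measurable_id.sub_const c).aestronglyMeasurable.mul
        hVint.aestronglyMeasurable).restrict
    · refine (ae_restrict_iff' measurableSet_Ioi).2 (Filter.Eventually.of_forall fun z hz => ?_)
      have hz0 : 0 < z := lt_of_le_of_lt hc hz
      rw [Real.norm_eq_abs, Real.norm_eq_abs, abs_of_nonneg (mul_nonneg (by linarith [(mem_Ioi.mp hz).le] : (0:ℝ) ≤ z - c) (hVnonneg z)),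
        abs_of_nonneg (mul_nonneg hz0.le (hVnonneg z))]
      exact mul_le_mul_of_nonneg_right (by linarith) (hVnonneg z)
  -- the key bounds on I(c)
  have keyI : ∀ t c : ℝ, 0 ≤ t → t ≤ c →
      (0 ≤ ∫ y in Ioi (0:ℝ), V (y + c) * y) ∧
      (∫ y in Ioi (0:ℝ), V (y + c) * y) ≤ ∫ z in Ioi t, z * V z := by
    intro t c ht htc
    have hc : 0 ≤ c := ht.trans htc
    rw [subst_integral V c]
    constructor
    · exact setIntegral_nonneg measurableSet_Ioi fun z hz =>
        mul_nonneg (by linarith [(mem_Ioi.mp hz)]) (hVnonneg z)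
    · calc (∫ z in Ioi c, (z - c) * V z) ≤ ∫ z in Ioi c, z * V z := by
            refine setIntegral_mono_on (hdiffInt c hc) (hzV c hc) measurableSet_Ioi
              fun z hz => ?_
            exact mul_le_mul_of_nonneg_right (by linarith) (hVnonneg z)
        _ ≤ ∫ z in Ioi t, z * V z := by
            refine setIntegral_mono_set (hzV t ht) ?_ ?_
            · refine (ae_restrict_iff' measurableSet_Ioi).2
                (Filter.Eventually.of_forall fun z hz => ?_)
              exact mul_nonneg (lt_of_le_of_lt ht hz).le (hVnonneg z)
            · exact HasSubset.Subset.eventuallyLE (Ioi_subset_Ioi htc)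
  constructor
  · intro γ hγ x hx
    set s := Real.sqrt γ with hs
    have hs0 : 0 ≤ s := Real.sqrt_nonneg γ
    have hγ0 : (0:ℝ) < γ := lt_of_lt_of_le one_pos hγ
    obtain ⟨hx1, hx2⟩ := hx
    set A := 2 * γ * Real.sqrt a - x with hA
    have hAs : s ≤ A := by simp only [hA]; linarith
    have hxs : s ≤ x := hx1
    have hx0 : 0 ≤ x := hs0.trans hxs
    have hA0 : 0 ≤ A := hs0.trans hAs
    set M := ∫ z in Ioi s, z * V z with hM
    obtain ⟨hIA0, hIAM⟩ := keyI s A hs0 hAs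
    obtain ⟨hIx0, hIxM⟩ := keyI s x hs0 hxs
    have hintA := subst_integrable V A (hdiffInt A hA0)
    have hintx := subst_integrable V x (hdiffInt x hx0)
    have hsplit : (∫ y in Ioi (0:ℝ), (V (y + 2 * γ * Real.sqrt a - x) - V (y + x)) * y)
        = (∫ y in Ioi (0:ℝ), V (y + A) * y) - ∫ y in Ioi (0:ℝ), V (y + x) * y := by
      rw [← integral_sub hintA hintx]
      refine setIntegral_congr_fun measurableSet_Ioi fun y _ => ?_
      simp only [hA]
      ring_nf
    have habs : |(∫ y in Ioi (0:ℝ), V (y + A) * y) - ∫ y in Ioi (0:ℝ), V (y + x) * y| ≤ M := by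
      rw [abs_sub_le_iff]
      constructor <;> linarith
    have hM0 : 0 ≤ M := le_trans hIx0 hIxM
    rw [hGam, hsplit]
    rw [abs_mul]
    have : sigmaGam V a γ / γ = |1 / (2 * a * γ)| * M := by
      rw [sigmaGam, ← hs, ← hM]
      rw [abs_of_nonneg (by positivity)]
      rcases eq_or_ne a 0 with h0 | h0
      · simp [h0]
      · field_simp
    rw [this]
    exact mul_le_mul_of_nonneg_left habs (abs_nonneg _)
  · -- second part
    have hg : Integrable (fun z => |z| * V z) := hVmom
    have h1 : Tendsto (fun t : ℝ => ∫ z in Ioi t, z * V z) atTop (𝓝 0) := by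
      have h2 : ∀ t : ℝ, 0 ≤ t → (∫ z in Ioi t, z * V z)
          = (∫ z in Ioi (0:ℝ), z * V z) - ∫ z in (0:ℝ)..t, z * V z := by
        intro t ht
        rw [intervalIntegral.integral_of_le ht, eq_sub_iff_add_eq, add_comm,
          ← setIntegral_union (Ioc_disjoint_Ioi le_rfl) measurableSet_Ioi
            ((hzV 0 le_rfl).mono_set Ioc_subset_Ioi_self) ((hzV 0 le_rfl).mono_set (Ioi_subset_Ioi ht)),
          Ioc_union_Ioi_eq_Ioi ht]
      have h3 : Tendsto (fun t : ℝ => (∫ z in Ioi (0:ℝ), z * V z) - ∫ z in (0:ℝ)..t, z * V z)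
          atTop (𝓝 0) := by
        have := intervalIntegral_tendsto_integral_Ioi (0:ℝ) (hzV 0 le_rfl) tendsto_id
        have := Tendsto.sub (tendsto_const_nhds
          (x := ∫ z in Ioi (0:ℝ), z * V z) (f := atTop)) this
        simpa using this
      refine h3.congr' ?_
      filter_upwards [eventually_ge_atTop (0:ℝ)] with t ht
      exact (h2 t ht).symm
    have hsqrt : Tendsto Real.sqrt atTop atTop := by
      refine tendsto_atTop_atTop.2 fun b => ⟨max (b ^ 2) 0, fun x hx => ?_⟩
      calc b ≤ |b| := le_abs_self b
        _ = Real.sqrt (b ^ 2) := (Real.sqrt_sq_eq_abs b).symm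
        _ ≤ Real.sqrt x := Real.sqrt_le_sqrt (le_trans (le_max_left _ _) hx)
    have : Tendsto (fun γ : ℝ => ∫ z in Ioi (Real.sqrt γ), z * V z) atTop (𝓝 0) :=
      h1.comp hsqrt
    have := this.const_mul (1 / (2 * a))
    simpa [sigmaGam] using this

end
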